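/- On a binary alphabet, recursive rejection sampling with two draft tokens sampled without replacement achieves 100% acceptance: let 𝒳 = {0,1} and let p, q be probability distributions on 𝒳 with p ≠ q; run recursive rejection sampling with K = 2, p^(1) := p, and p^(2)(·|x) := the point mass at 1 − x. Then the probability that both draft tokens are rejected is 0 — indeed, conditionally on the first draft being rejected, the second draft is accepted with probability 1 — so the output Z equals an accepted draft token almost surely and Pr{Z = z} = q(z) for all z ∈ 𝒳. -/
import Mathlib


open scoped BigOperators Classical

/-- A probability distribution on a finite alphabet. -/
def IsProbDist {X : Type*} [Fintype X] (p : X → ℝ) : Prop :=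
  (∀ x, 0 ≤ p x) ∧ ∑ x, p x = 1

/-- `Norm` with a default distribution `d`, used when `f` is identically zero. -/
noncomputable def normOr {X : Type*} [Fintype X] (d f : X → ℝ) : X → ℝ :=
  if ∀ x, f x = 0 then d else fun x => f x / ∑ x', f x'

/-- Acceptance probability `min {1, qv / pv}`, interpreted as `1` when `pv = 0`. -/
noncomputable def accProb (pv qv : ℝ) : ℝ :=
  if pv = 0 then 1 else min 1 (qv / pv)

/-- Residual distributions: `Qres K q pdraft d m` is `q^{(m+1)}` (it is fed the whole draft
tuple for convenience; it only depends on the first `m - 1` coordinates). -/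
noncomputable def Qres {X : Type*} [Fintype X] (K : ℕ) (q : X → ℝ)
    (pdraft : (k : Fin K) → (Fin (k : ℕ) → X) → X → ℝ) (d : X → ℝ) :
    ℕ → (Fin K → X) → X → ℝ
  | 0, _, t => q t
  | m + 1, x, t =>
    if hm : m < K then
      normOr d (fun s =>
        max 0 (Qres K q pdraft d m x s -
          pdraft ⟨m, hm⟩ (fun j => x (Fin.castLE hm.le j)) s)) t
    else d t

/-- Probability that the draft process produces the tuple `x` of draft tokens. -/
noncomputable def trajProb {X : Type*} [Fintype X] (K : ℕ)
    (pdraft : (k : Fin K) → (Fin (k : ℕ) → X) → X → ℝ) (x : Fin K → X) : ℝ :=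
  ∏ k : Fin K, pdraft k (fun j => x (Fin.castLE k.isLt.le j)) (x k)

/-- Conditional acceptance probability of the `m`-th draft (0-indexed), given the drafts. -/
noncomputable def thetaN {X : Type*} [Fintype X] (K : ℕ) (q : X → ℝ)
    (pdraft : (k : Fin K) → (Fin (k : ℕ) → X) → X → ℝ) (d : X → ℝ)
    (m : ℕ) (x : Fin K → X) : ℝ :=
  if hm : m < K then
    accProb (pdraft ⟨m, hm⟩ (fun j => x (Fin.castLE hm.le j)) (x ⟨m, hm⟩))
      (Qres K q pdraft d m x (x ⟨m, hm⟩))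
  else 0

/-- The law of the output `Z` of recursive rejection sampling: sum over draft tuples of the
probability of the tuple times the conditional probability that the output equals `z`
(first acceptance at round `k` outputs the `k`-th draft; if every draft is rejected the
output is drawn from the last residual distribution `q^{(K+1)}`). -/
noncomputable def rrsLaw {X : Type*} [Fintype X] (K : ℕ) (q : X → ℝ)
    (pdraft : (k : Fin K) → (Fin (k : ℕ) → X) → X → ℝ) (d : X → ℝ) (z : X) : ℝ :=
  ∑ x : Fin K → X, trajProb K pdraft x *
    ((∑ k : Fin K,
        (∏ j ∈ Finset.range (k : ℕ), (1 - thetaN K q pdraft d j x)) *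
          thetaN K q pdraft d (k : ℕ) x * (if x k = z then 1 else 0)) +
      (∏ j ∈ Finset.range K, (1 - thetaN K q pdraft d j x)) *
        Qres K q pdraft d K x z)


/-- The draft kernels on the binary alphabet `Fin 2`: the first draft is drawn from `p`, and
the second draft is the point mass at `1 - x` where `x` is the first draft. -/
noncomputable def binDraft (p : Fin 2 → ℝ) :
    (k : Fin 2) → (Fin (k : ℕ) → Fin 2) → Fin 2 → ℝ :=
  fun k h y => if hk : 0 < (k : ℕ) then (if y = 1 - h ⟨0, hk⟩ then 1 else 0) else p y


section RRSHelpers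

lemma binDraft_zero' (p : Fin 2 → ℝ) (hm : (0:ℕ) < 2) (h : Fin 0 → Fin 2) (y : Fin 2) :
    binDraft p ⟨0, hm⟩ h y = p y := by simp [binDraft]

lemma mul_accProb (a c : ℝ) (ha : 0 ≤ a) (hc : 0 ≤ c) : a * accProb a c = min a c := by
  rcases eq_or_lt_of_le ha with h | h
  · simp [accProb, ← h, min_eq_left hc]
  · rw [accProb, if_neg (ne_of_gt h)]
    rcases le_total c a with hca | hca
    · rw [min_eq_right ((div_le_one h).2 hca), min_eq_right hca, mul_div_cancel₀ _ (ne_of_gt h)]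
    · rw [min_eq_left ((one_le_div h).2 hca), min_eq_left hca, mul_one]

lemma mul_one_sub_accProb (a c : ℝ) (ha : 0 ≤ a) (hc : 0 ≤ c) :
    a * (1 - accProb a c) = a - min a c := by
  rw [mul_sub, mul_one, mul_accProb a c ha hc]

lemma accProb_one (c : ℝ) : accProb 1 c = min 1 c := by norm_num [accProb]

lemma normOr_res (p q d : Fin 2 → ℝ) (hp2 : p 0 + p 1 = 1) (hq2 : q 0 + q 1 = 1)
    (h0 : p 0 ≠ q 0) (t : Fin 2) :
    normOr d (fun s => max 0 (q s - p s)) t = if p t < q t then 1 else 0 := by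
  have hne : ¬ ∀ s : Fin 2, max 0 (q s - p s) = 0 := by
    intro h
    rcases lt_or_gt_of_ne h0 with hlt | hgt
    · have := h 0; rw [max_eq_right (by linarith)] at this; linarith
    · have := h 1; rw [max_eq_right (by linarith)] at this; linarith
  rw [normOr, if_neg hne]
  show max 0 (q t - p t) / (∑ s : Fin 2, max 0 (q s - p s)) = _
  rw [Fin.sum_univ_two]
  rcases lt_or_gt_of_ne h0 with hlt | hgt
  · fin_cases t <;> simp only [Fin.mk_zero, Fin.mk_one]
    · rw [max_eq_right (le_of_lt (by linarith)), max_eq_left (by linarith), add_zero,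
        div_self (by linarith), if_pos (show p 0 < q 0 from hlt)]
    · rw [max_eq_left (show q 1 - p 1 ≤ 0 by linarith), max_eq_right
        (le_of_lt (show (0:ℝ) < q 0 - p 0 by linarith)), add_zero, zero_div,
        if_neg (by push_neg; linarith)]
  · fin_cases t <;> simp only [Fin.mk_zero, Fin.mk_one]
    · rw [max_eq_left (show q 0 - p 0 ≤ 0 by linarith), max_eq_right
        (le_of_lt (show (0:ℝ) < q 1 - p 1 by linarith)), zero_add, zero_div,
        if_neg (by push_neg; linarith)]
    · rw [max_eq_right (le_of_lt (show (0:ℝ) < q 1 - p 1 by linarith)),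
        max_eq_left (show q 0 - p 0 ≤ 0 by linarith), zero_add,
        div_self (by linarith), if_pos (show p 1 < q 1 by linarith)]

variable (p q d : Fin 2 → ℝ)

lemma Qres_one (x : Fin 2 → Fin 2) (t : Fin 2) :
    Qres 2 q (binDraft p) d 1 x t = normOr d (fun s => max 0 (q s - p s)) t := by
  simp [Qres, binDraft]

lemma thetaN_zero (x : Fin 2 → Fin 2) :
    thetaN 2 q (binDraft p) d 0 x = accProb (p (x 0)) (q (x 0)) := by
  simp [thetaN, binDraft, Qres, Fin.mk_zero]

lemma thetaN_one (x : Fin 2 → Fin 2) :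
    thetaN 2 q (binDraft p) d 1 x =
      accProb (if x 1 = 1 - x 0 then 1 else 0)
        (normOr d (fun s => max 0 (q s - p s)) (x 1)) := by
  simp [thetaN, binDraft, Qres, Fin.mk_zero, Fin.mk_one]

lemma trajProb_eval (x : Fin 2 → Fin 2) :
    trajProb 2 (binDraft p) x = p (x 0) * (if x 1 = 1 - x 0 then 1 else 0) := by
  simp [trajProb, Fin.prod_univ_two, binDraft, Fin.mk_zero]

lemma theta_one_eval (hp2 : p 0 + p 1 = 1) (hq2 : q 0 + q 1 = 1) (hpq0 : p 0 ≠ q 0)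
    (x : Fin 2 → Fin 2) (hb : x 1 = 1 - x 0) :
    thetaN 2 q (binDraft p) d 1 x = if p (x 1) < q (x 1) then 1 else 0 := by
  rw [thetaN_one, if_pos hb, normOr_res p q d hp2 hq2 hpq0, accProb_one]
  by_cases hr : p (x 1) < q (x 1)
  · rw [if_pos hr, min_self]
  · rw [if_neg hr]
    norm_num

lemma rejected_first_means_second_sure (hp : IsProbDist p) (hq : IsProbDist q)
    (hpq0 : p 0 ≠ q 0) (x : Fin 2 → Fin 2)
    (hx : trajProb 2 (binDraft p) x * (1 - thetaN 2 q (binDraft p) d 0 x) ≠ 0) :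
    thetaN 2 q (binDraft p) d 1 x = 1 := by
  have hp2 : p 0 + p 1 = 1 := by rw [← Fin.sum_univ_two p]; exact hp.2
  have hq2 : q 0 + q 1 = 1 := by rw [← Fin.sum_univ_two q]; exact hq.2
  have htr : trajProb 2 (binDraft p) x ≠ 0 := fun h => hx (by rw [h, zero_mul])
  rw [trajProb_eval] at htr
  have hb : x 1 = 1 - x 0 := by
    by_contra h; exact htr (by rw [if_neg h, mul_zero])
  have hpx : p (x 0) ≠ 0 := fun h => htr (by rw [h, zero_mul])
  have hpxpos : 0 < p (x 0) := lt_of_le_of_ne (hp.1 _) (Ne.symm hpx)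
  have hth0 : 1 - thetaN 2 q (binDraft p) d 0 x ≠ 0 := fun h => hx (by rw [h, mul_zero])
  rw [thetaN_zero, accProb, if_neg hpx] at hth0
  have hqlt : q (x 0) < p (x 0) := by
    by_contra h
    push_neg at h
    exact hth0 (by rw [min_eq_left ((one_le_div hpxpos).2 h)]; ring)
  have h01 : ∀ a : Fin 2, a = 0 ∨ a = 1 := by decide
  have hlt1 : p (x 1) < q (x 1) := by
    rcases h01 (x 0) with h | h
    · rw [h, show ((1:Fin 2) - 0) = 1 by decide] at hb
      rw [h] at hqlt; rw [hb]; linarith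
    · rw [h, show ((1:Fin 2) - 1) = 0 by decide] at hb
      rw [h] at hqlt; rw [hb]; linarith
  rw [theta_one_eval p q d hp2 hq2 hpq0 x hb, if_pos hlt1]

lemma term_simp (hp : IsProbDist p) (hq : IsProbDist q) (hpq0 : p 0 ≠ q 0)
    (x : Fin 2 → Fin 2) (z : Fin 2) :
    trajProb 2 (binDraft p) x *
      ((∑ k : Fin 2,
          (∏ j ∈ Finset.range (k : ℕ), (1 - thetaN 2 q (binDraft p) d j x)) *
            thetaN 2 q (binDraft p) d (k : ℕ) x *
            (@ite ℝ (x k = z) (Classical.propDecidable _) 1 0)) +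
        (∏ j ∈ Finset.range 2, (1 - thetaN 2 q (binDraft p) d j x)) *
          Qres 2 q (binDraft p) d 2 x z) =
    p (x 0) * (if x 1 = 1 - x 0 then (1:ℝ) else 0) *
      (accProb (p (x 0)) (q (x 0)) * (if x 0 = z then 1 else 0) +
       (1 - accProb (p (x 0)) (q (x 0))) *
         ((if p (x 1) < q (x 1) then (1:ℝ) else 0) * (if x 1 = z then 1 else 0))) := by
  have hp2 : p 0 + p 1 = 1 := by rw [← Fin.sum_univ_two p]; exact hp.2
  have hq2 : q 0 + q 1 = 1 := by rw [← Fin.sum_univ_two q]; exact hq.2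
  rw [Fin.sum_univ_two]
  simp only [Finset.prod_range_succ, Finset.prod_range_zero, Fin.val_zero, Fin.val_one,
    one_mul]
  by_cases hb : x 1 = 1 - x 0
  · rw [trajProb_eval, theta_one_eval p q d hp2 hq2 hpq0 x hb, thetaN_zero, if_pos hb]
    by_cases hr : p (x 1) < q (x 1)
    · rw [if_pos hr]; ring
    · rw [if_neg hr]
      by_cases hpx : p (x 0) = 0
      · rw [hpx]; ring
      · have hpxpos : 0 < p (x 0) := lt_of_le_of_ne (hp.1 _) (Ne.symm hpx)
        have hpq1 : p 1 ≠ q 1 := fun h => hpq0 (by linarith)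
        have h01 : ∀ a : Fin 2, a = 0 ∨ a = 1 := by decide
        have hx1lt : q (x 1) < p (x 1) := by
          rcases h01 (x 1) with h | h <;> rw [h] at hr ⊢ <;>
            [exact lt_of_le_of_ne (not_lt.1 hr) (fun hh => hpq0 hh.symm);
             exact lt_of_le_of_ne (not_lt.1 hr) (fun hh => hpq1 hh.symm)]
        have hx0gt : p (x 0) < q (x 0) := by
          rcases h01 (x 0) with h | h
          · rw [h, show ((1:Fin 2) - 0) = 1 by decide] at hb
            rw [hb] at hx1lt; rw [h]; linarith
          · rw [h, show ((1:Fin 2) - 1) = 0 by decide] at hb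
            rw [hb] at hx1lt; rw [h]; linarith
        have hθ0 : accProb (p (x 0)) (q (x 0)) = 1 := by
          rw [accProb, if_neg hpx, min_eq_left ((one_le_div hpxpos).2 hx0gt.le)]
        rw [hθ0]; ring
  · rw [trajProb_eval, if_neg hb]; ring

end RRSHelpers

/-- **On a binary alphabet, recursive rejection sampling with two draft tokens sampled without
replacement achieves 100% acceptance.**  Conditionally on the first draft being rejected the
second draft is accepted with probability 1, the probability that both drafts are rejected
is 0, and the output recovers the target distribution. -/
theorem rrs_binary_full_acceptance
    (p q : Fin 2 → ℝ) (hp : IsProbDist p) (hq : IsProbDist q) (hpq : p ≠ q)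
    (d : Fin 2 → ℝ) (hd : IsProbDist d) :
    (∀ x : Fin 2 → Fin 2,
        trajProb 2 (binDraft p) x * (1 - thetaN 2 q (binDraft p) d 0 x) ≠ 0 →
        thetaN 2 q (binDraft p) d 1 x = 1) ∧
    (∑ x : Fin 2 → Fin 2, trajProb 2 (binDraft p) x *
        ∏ j ∈ Finset.range 2, (1 - thetaN 2 q (binDraft p) d j x)) = 0 ∧
    (∀ z, rrsLaw 2 q (binDraft p) d z = q z) := by
  have hp2 : p 0 + p 1 = 1 := by rw [← Fin.sum_univ_two p]; exact hp.2
  have hq2 : q 0 + q 1 = 1 := by rw [← Fin.sum_univ_two q]; exact hq.2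
  have hpq0 : p 0 ≠ q 0 := by
    intro h0
    apply hpq
    funext t
    have h1 : p 1 = q 1 := by linarith
    have h01 : ∀ a : Fin 2, a = 0 ∨ a = 1 := by decide
    rcases h01 t with h | h <;> rw [h] <;> assumption
  refine ⟨fun x hx => rejected_first_means_second_sure p q d hp hq hpq0 x hx, ?_, ?_⟩
  · apply Finset.sum_eq_zero
    intro x _
    simp only [Finset.prod_range_succ, Finset.prod_range_zero, one_mul]
    by_cases h : trajProb 2 (binDraft p) x * (1 - thetaN 2 q (binDraft p) d 0 x) = 0
    · rw [show trajProb 2 (binDraft p) x *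
          ((1 - thetaN 2 q (binDraft p) d 0 x) * (1 - thetaN 2 q (binDraft p) d 1 x)) =
          trajProb 2 (binDraft p) x * (1 - thetaN 2 q (binDraft p) d 0 x) *
            (1 - thetaN 2 q (binDraft p) d 1 x) by ring, h, zero_mul]
    · rw [rejected_first_means_second_sure p q d hp hq hpq0 x h]; ring
  · intro z
    rw [rrsLaw]
    refine Eq.trans (Finset.sum_congr rfl fun x _ => term_simp p q d hp hq hpq0 x z) ?_
    rw [← Equiv.sum_comp (finTwoArrowEquiv (Fin 2)).symm, Fintype.sum_prod_type]
    simp only [finTwoArrowEquiv_symm_apply, Fin.sum_univ_two, Matrix.cons_val_zero,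
      Matrix.cons_val_one, Matrix.head_cons]
    rw [if_neg (show ¬(0:Fin 2) = 1 - 0 by decide), if_pos (show (1:Fin 2) = 1 - 0 by decide),
        if_pos (show (0:Fin 2) = 1 - 1 by decide), if_neg (show ¬(1:Fin 2) = 1 - 1 by decide)]
    have h01 : ∀ a : Fin 2, a = 0 ∨ a = 1 := by decide
    have e1 : p 0 * accProb (p 0) (q 0) = min (p 0) (q 0) :=
      mul_accProb _ _ (hp.1 0) (hq.1 0)
    have e2 : p 1 * accProb (p 1) (q 1) = min (p 1) (q 1) :=
      mul_accProb _ _ (hp.1 1) (hq.1 1)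
    have e3 : p 0 * (1 - accProb (p 0) (q 0)) = p 0 - min (p 0) (q 0) :=
      mul_one_sub_accProb _ _ (hp.1 0) (hq.1 0)
    have e4 : p 1 * (1 - accProb (p 1) (q 1)) = p 1 - min (p 1) (q 1) :=
      mul_one_sub_accProb _ _ (hp.1 1) (hq.1 1)
    rcases lt_or_gt_of_ne hpq0 with hlt | hgt
    · have h1 : q 1 < p 1 := by linarith
      rw [min_eq_left hlt.le] at e1 e3
      rw [min_eq_right h1.le] at e2 e4
      rw [if_pos hlt, if_neg (not_lt.2 h1.le)]
      rcases h01 z with hz | hz <;> rw [hz]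
      · rw [if_pos rfl, if_neg (show ¬(1:Fin 2) = 0 by decide)]
        nlinarith [e1, e2, e3, e4]
      · rw [if_neg (show ¬(0:Fin 2) = 1 by decide), if_pos rfl]
        nlinarith [e1, e2, e3, e4]
    · have h1 : p 1 < q 1 := by linarith
      rw [min_eq_right hgt.le] at e1 e3
      rw [min_eq_left h1.le] at e2 e4
      rw [if_neg (not_lt.2 hgt.le), if_pos h1]
      rcases h01 z with hz | hz <;> rw [hz]
      · rw [if_pos rfl, if_neg (show ¬(1:Fin 2) = 0 by decide)]
        nlinarith [e1, e2, e3, e4]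
      · rw [if_neg (show ¬(0:Fin 2) = 1 by decide), if_pos rfl]
        nlinarith [e1, e2, e3, e4]
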